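/- The null space {v ∈ ℂ^N ⊗ ℂ^N : Λv = 0} of Λ has complex dimension equal to the central binomial coefficient C(2m, m). -/

import Mathlib

open Matrix Kronecker Finset
open scoped ComplexOrder

noncomputable section

/-- A Majorana family: `2*m` Hermitian `2^m × 2^m` complex matrices squaring to the
identity and pairwise anticommuting. -/
structure MajoranaFamily (m : ℕ) where
  c : Fin (2*m) → Matrix (Fin (2^m)) (Fin (2^m)) ℂ
  herm : ∀ j, (c j).IsHermitian
  sq : ∀ j, c j * c j = 1
  anticomm : ∀ j k, j ≠ k → c j * c k = -(c k * c j)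

abbrev Mat (m : ℕ) := Matrix (Fin (2^m)) (Fin (2^m)) ℂ
abbrev Mat2 (m : ℕ) := Matrix (Fin (2^m) × Fin (2^m)) (Fin (2^m) × Fin (2^m)) ℂ
abbrev MatN (m n : ℕ) := Matrix (Fin n → Fin (2^m)) (Fin n → Fin (2^m)) ℂ

variable {m : ℕ}

/-- A state: a positive semidefinite matrix of trace `1`. -/
def IsState {ι : Type*} [Fintype ι] (ρ : Matrix ι ι ℂ) : Prop :=
  ρ.PosSemidef ∧ ρ.trace = 1

/-- The positive semidefinite square root of a positive semidefinite matrix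
(the former Mathlib `Matrix.PosSemidef.sqrt`, spelled out). -/
def posSemidefSqrt {n 𝕜 : Type*} [Fintype n] [DecidableEq n] [RCLike 𝕜] {A : Matrix n n 𝕜}
    (hA : A.PosSemidef) : Matrix n n 𝕜 :=
  hA.1.eigenvectorUnitary.1 * diagonal ((↑) ∘ (√·) ∘ hA.1.eigenvalues) *
    (star hA.1.eigenvectorUnitary : Matrix n n 𝕜)

/-- The trace norm `‖X‖₁ = Tr √(XᴴX)`. -/
def traceNorm {ι : Type*} [Fintype ι] [DecidableEq ι] (X : Matrix ι ι ℂ) : ℝ :=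
  ((posSemidefSqrt (Matrix.posSemidef_conjTranspose_mul_self X)).trace).re

/-- The rotated Majorana operators `c̃_j = Σ_i R_{ij} c_i`. -/
def tilde (F : MajoranaFamily m) (R : Matrix (Fin (2*m)) (Fin (2*m)) ℝ)
    (j : Fin (2*m)) : Mat m :=
  ∑ i, (R i j : ℂ) • F.c i

/-- Standard-form Gaussian state `2^{-m} ∏_{k=1}^m (I + i λ_k c̃_{2k-1} c̃_{2k})`
(ordered product; the factors commute). -/
def gaussStd (F : MajoranaFamily m) (R : Matrix (Fin (2*m)) (Fin (2*m)) ℝ)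
    (lam : Fin m → ℝ) : Mat m :=
  ((2:ℂ)^m)⁻¹ • (List.ofFn (fun k : Fin m =>
    (1 : Mat m) + (Complex.I * (lam k : ℂ)) •
      (tilde F R ⟨2*k.val, by omega⟩ * tilde F R ⟨2*k.val+1, by omega⟩))).prod

/-- A pure Gaussian state: a standard-form Gaussian state with all `λ_k ∈ {-1,1}`,
for some `R ∈ SO(2m,ℝ)`. -/
def IsPureGaussian (F : MajoranaFamily m) (ρ : Mat m) : Prop :=
  ∃ (R : Matrix (Fin (2*m)) (Fin (2*m)) ℝ) (lam : Fin m → ℝ),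
    Rᵀ * R = 1 ∧ R.det = 1 ∧ (∀ k, lam k = 1 ∨ lam k = -1) ∧ ρ = gaussStd F R lam

/-- A convex-Gaussian state: a finite convex combination of pure Gaussian states. -/
def IsConvexGaussian (F : MajoranaFamily m) (ρ : Mat m) : Prop :=
  ∃ (k : ℕ) (p : Fin k → ℝ) (g : Fin k → Mat m),
    (∀ i, 0 ≤ p i) ∧ (∑ i, p i) = 1 ∧ (∀ i, IsPureGaussian F (g i)) ∧
    ρ = ∑ i, p i • g i

/-- `Λ = Σ_j c_j ⊗ c_j` on `ℂ^N ⊗ ℂ^N`. -/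
def Lambda (F : MajoranaFamily m) : Mat2 m := ∑ j, F.c j ⊗ₖ F.c j

/-- Ordered product `c_{a_1} ⋯ c_{a_r}` over a finite set `S = {a_1 < … < a_r}`. -/
def majProd (F : MajoranaFamily m) (S : Finset (Fin (2*m))) : Mat m :=
  ((S.sort (· ≤ ·)).map F.c).prod

/-- An even operator: a complex linear combination of the identity and products of
an even number of distinct Majorana operators. -/
def IsEven (F : MajoranaFamily m) (X : Mat m) : Prop :=
  X ∈ Submodule.span ℂ {Y : Mat m | ∃ S : Finset (Fin (2*m)), Even S.card ∧ Y = majProd F S}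

/-- The Hermitian correlator `i^k c_{a_1} ⋯ c_{a_{2k}}` associated to a set of
cardinality `2k`. -/
def corrOp (F : MajoranaFamily m) (S : Finset (Fin (2*m))) : Mat m :=
  (Complex.I ^ (S.card / 2)) • majProd F S

/-- The operator acting as `A` on the `k`-th tensor factor of `(ℂ^N)^{⊗n}` and as the
identity on the other factors. -/
def embedAt (n : ℕ) (k : Fin n) (A : Mat m) : MatN m n :=
  fun x y => A (x k) (y k) * ∏ l ∈ Finset.univ.erase k, (if x l = y l then 1 else 0)

/-- `Λ^{k,l} = Σ_j c_j^{(k)} c_j^{(l)}` on `(ℂ^N)^{⊗n}`. -/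
def LambdaKL (F : MajoranaFamily m) (n : ℕ) (k l : Fin n) : MatN m n :=
  ∑ j, embedAt n k (F.c j) * embedAt n l (F.c j)

/-- Partial trace of an operator on `(ℂ^N)^{⊗n}` over the tensor factors `2, …, n`. -/
def ptrRest (n : ℕ) (hn : 1 ≤ n) (ρ : MatN m n) : Mat m := fun a b =>
  ∑ g : Fin (n-1) → Fin (2^m),
    ρ (fun i => if h : i.val = 0 then a else g ⟨i.val - 1, by omega⟩)
      (fun i => if h : i.val = 0 then b else g ⟨i.val - 1, by omega⟩)

/-- `ρ` has an `n`-Gaussian-symmetric extension. -/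
def HasGSExt (F : MajoranaFamily m) (n : ℕ) (hn : 1 ≤ n) (ρ : Mat m) : Prop :=
  ∃ ext : MatN m n, IsState ext ∧ ptrRest n hn ext = ρ ∧
    ∀ k l : Fin n, k ≠ l → LambdaKL F n k l * ext = 0

/-- `‖Λ‖₁ = 2(m+1) C(2m, m+1)`. -/
def lambdaNorm (m : ℕ) : ℝ := 2*(m+1) * (Nat.choose (2*m) (m+1) : ℝ)

/-- `ε(n) = min {2, 10 ‖Λ‖₁² 2^{2m} n^{-1/3}}`. -/
def epsB (m n : ℕ) : ℝ :=
  min 2 (10 * lambdaNorm m ^ 2 * 2^(2*m) / (n:ℝ) ^ ((1:ℝ)/3))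

/-- `χ(n) = (ε(n)/2) (2m)!/m!`. -/
def chiB (m n : ℕ) : ℝ :=
  epsB m n / 2 * ((Nat.factorial (2*m) : ℝ) / (Nat.factorial m : ℝ))

/-- `δ(n) = χ(n)/(1+χ(n))`. -/
def deltaB (m n : ℕ) : ℝ := chiB m n / (1 + chiB m n)

/-- The parity operator `P = i^m c_1 ⋯ c_{2m}`. -/
def parityOp (F : MajoranaFamily m) : Mat m :=
  (Complex.I ^ m) • (((List.finRange (2*m)).map F.c).prod)

/-- The operator `I^{⊗ r} ⊗ c_s ⊗ P^{⊗(n-r-1)}` on `(ℂ^N)^{⊗n}` (0-based position `r`). -/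
def dOp (F : MajoranaFamily m) (n : ℕ) (r : Fin n) (s : Fin (2*m)) : MatN m n :=
  fun x y => ∏ l : Fin n,
    if l < r then (if x l = y l then 1 else 0)
    else if l = r then F.c s (x l) (y l)
    else parityOp F (x l) (y l)

/-- The family `d_1, …, d_{2mn}`, where `d_{2m(r-1)+s} = I^{⊗(r-1)} ⊗ c_s ⊗ P^{⊗(n-r)}`. -/
def dAll (hm : 1 ≤ m) (F : MajoranaFamily m) (n : ℕ) (j : Fin (2*(m*n))) : MatN m n :=
  dOp F n
    ⟨j.val / (2*m), by
      have h1 := j.isLt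
      rw [Nat.div_lt_iff_lt_mul (by omega)]
      have h2 : n * (2*m) = 2*(m*n) := by ring
      omega⟩
    ⟨j.val % (2*m), Nat.mod_lt _ (by omega)⟩

/-- The index `2m(k-1)+j` (0-based: `2mk + j`) into a family of `2mn` Majorana operators. -/
def bigIdx (m n : ℕ) (k : Fin n) (j : Fin (2*m)) : Fin (2*(m*n)) :=
  ⟨2*m*k.val + j.val, by
    have hk : k.val + 1 ≤ n := k.isLt
    have hj := j.isLt
    have h1 : 2*m*(k.val+1) = 2*m*k.val + 2*m := by ring
    have h2 : 2*m*(k.val+1) ≤ 2*m*n := Nat.mul_le_mul le_rfl hk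
    have h3 : 2*m*n = 2*(m*n) := by ring
    omega⟩

/-- `Γ^{k,l} = Σ_{j=1}^{2m} (-1)^{m-j} e_{2m(k-1)+j} · e_{2m(l-1)+1} ⋯ ê_{2m(l-1)+j} ⋯ e_{2ml}`. -/
def GammaKL (m n : ℕ) (E : MajoranaFamily (m*n)) (k l : Fin n) :
    Matrix (Fin (2^(m*n))) (Fin (2^(m*n))) ℂ :=
  ∑ j : Fin (2*m), ((-1:ℂ) ^ ((m:ℤ) - (j.val+1 : ℤ))) •
    (E.c (bigIdx m n k j) *
      (((List.finRange (2*m)).filter (fun i => i ≠ j)).map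
        (fun i => E.c (bigIdx m n l i))).prod)

/-- `C = i^{mn} e_1 ⋯ e_{2mn}`. -/
def bigParity (m n : ℕ) (E : MajoranaFamily (m*n)) :
    Matrix (Fin (2^(m*n))) (Fin (2^(m*n))) ℂ :=
  (Complex.I ^ (m*n)) • (((List.finRange (2*(m*n))).map E.c).prod)

/-- The `n`-fold tensor power `A^{⊗n}` of a matrix on `ℂ^N`. -/
def tpow (n : ℕ) (A : Mat m) : MatN m n := fun x y => ∏ k, A (x k) (y k)



namespace Stmt9

variable {m : ℕ}

lemma neg_one_sq_pow (n : ℕ) : ((-1:ℂ))^(2*n) = 1 := by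
  rw [pow_mul]; norm_num

lemma flip_aux {X Y : Mat m} {n : ℕ} (h : X = ((-1:ℂ)^n) • Y) : Y = ((-1:ℂ)^n) • X := by
  subst h
  rw [smul_smul, ← pow_add, show n + n = 2*n from by ring, neg_one_sq_pow, one_smul]

lemma c_move_notmem (F : MajoranaFamily m) (a : Fin (2*m)) :
    ∀ (L : List (Fin (2*m))), a ∉ L →
      F.c a * (L.map F.c).prod = ((-1:ℂ)^L.length) • ((L.map F.c).prod * F.c a) := by
  intro L
  induction L with
  | nil => simp
  | cons b t ih =>
      intro ha
      have hab : a ≠ b := fun h => ha (h ▸ (List.mem_cons_self : b ∈ b :: t))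
      have hat : a ∉ t := fun h => ha (List.mem_cons_of_mem _ h)
      simp only [List.map_cons, List.prod_cons, List.length_cons]
      calc F.c a * (F.c b * (t.map F.c).prod)
          = (F.c a * F.c b) * (t.map F.c).prod := by rw [mul_assoc]
        _ = (-(F.c b * F.c a)) * (t.map F.c).prod := by rw [F.anticomm a b hab]
        _ = -(F.c b * (F.c a * (t.map F.c).prod)) := by rw [neg_mul, mul_assoc]
        _ = -(F.c b * (((-1:ℂ)^t.length) • ((t.map F.c).prod * F.c a))) := by rw [ih hat]
        _ = ((-1:ℂ)^(t.length+1)) • (F.c b * (t.map F.c).prod * F.c a) := by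
              rw [mul_smul_comm, ← neg_smul, pow_succ, mul_comm (((-1:ℂ))^t.length) (-1),
                neg_one_mul, mul_assoc]

lemma c_move_mem (F : MajoranaFamily m) (a : Fin (2*m)) :
    ∀ (L : List (Fin (2*m))), a ∈ L → L.Nodup →
      F.c a * (L.map F.c).prod = (((-1:ℂ)^L.length) * (-1)) • ((L.map F.c).prod * F.c a) := by
  intro L
  induction L with
  | nil => intro h; simp at h
  | cons b t ih =>
      intro ha hnd
      have hndt : t.Nodup := (List.nodup_cons.mp hnd).2
      simp only [List.map_cons, List.prod_cons, List.length_cons]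
      rcases eq_or_ne a b with rfl | hab
      · have hat : a ∉ t := (List.nodup_cons.mp hnd).1
        have h2 : (t.map F.c).prod * F.c a = ((-1:ℂ)^t.length) • (F.c a * (t.map F.c).prod) :=
          flip_aux (c_move_notmem F a t hat)
        have hc : ((-1:ℂ)^(t.length+1) * -1) * (-1:ℂ)^t.length = 1 := by
          rw [mul_assoc, mul_comm (-1:ℂ) ((-1:ℂ)^t.length), ← pow_succ, ← pow_add,
            show t.length + 1 + (t.length + 1) = 2*(t.length+1) from by ring, neg_one_sq_pow]
        calc F.c a * (F.c a * (t.map F.c).prod)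
            = (F.c a * F.c a) * (t.map F.c).prod := by rw [mul_assoc]
          _ = (t.map F.c).prod := by rw [F.sq, one_mul]
          _ = ((-1:ℂ)^(t.length+1) * -1) • (F.c a * (t.map F.c).prod * F.c a) := by
              rw [mul_assoc, h2, mul_smul_comm, ← mul_assoc, F.sq, one_mul, smul_smul, hc,
                one_smul]
      · have hat : a ∈ t := by
          rcases List.mem_cons.mp ha with h | h
          · exact absurd h hab
          · exact h
        calc F.c a * (F.c b * (t.map F.c).prod)
            = (F.c a * F.c b) * (t.map F.c).prod := by rw [mul_assoc]
          _ = (-(F.c b * F.c a)) * (t.map F.c).prod := by rw [F.anticomm a b hab]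
          _ = -(F.c b * (F.c a * (t.map F.c).prod)) := by rw [neg_mul, mul_assoc]
          _ = -(F.c b * ((((-1:ℂ)^t.length) * (-1)) • ((t.map F.c).prod * F.c a))) := by
              rw [ih hat hndt]
          _ = ((-1:ℂ)^(t.length+1) * -1) • (F.c b * (t.map F.c).prod * F.c a) := by
              rw [mul_smul_comm, ← neg_smul, mul_assoc]
              congr 1
              ring

lemma prod_sq (F : MajoranaFamily m) :
    ∀ (L : List (Fin (2*m))), L.Nodup →
      (L.map F.c).prod * (L.map F.c).prod = ((-1:ℂ)^(L.length.choose 2)) • 1 := by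
  intro L
  induction L with
  | nil => simp
  | cons b t ih =>
      intro hnd
      have hbt : b ∉ t := (List.nodup_cons.mp hnd).1
      have hndt : t.Nodup := (List.nodup_cons.mp hnd).2
      simp only [List.map_cons, List.prod_cons, List.length_cons]
      have h2 : (t.map F.c).prod * F.c b = ((-1:ℂ)^t.length) • (F.c b * (t.map F.c).prod) :=
        flip_aux (c_move_notmem F b t hbt)
      calc (F.c b * (t.map F.c).prod) * (F.c b * (t.map F.c).prod)
          = F.c b * ((t.map F.c).prod * F.c b) * (t.map F.c).prod := by
            simp only [mul_assoc]
        _ = F.c b * (((-1:ℂ)^t.length) • (F.c b * (t.map F.c).prod)) * (t.map F.c).prod := by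
            rw [h2]
        _ = ((-1:ℂ)^t.length) • ((F.c b * F.c b) * ((t.map F.c).prod * (t.map F.c).prod)) := by
            rw [mul_smul_comm, smul_mul_assoc]
            congr 1
            simp only [mul_assoc]
        _ = ((-1:ℂ)^t.length) • ((t.map F.c).prod * (t.map F.c).prod) := by rw [F.sq, one_mul]
        _ = ((-1:ℂ)^((t.length+1).choose 2)) • 1 := by
            rw [ih hndt, smul_smul, ← pow_add]
            congr 2
            rw [Nat.choose_succ_succ, Nat.choose_one_right, add_comm]

end Stmt9
namespace Stmt9

lemma c_mul_parity (F : MajoranaFamily m) (a : Fin (2*m)) :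
    F.c a * parityOp F = -(parityOp F * F.c a) := by
  unfold parityOp
  have hmem : a ∈ List.finRange (2*m) := List.mem_finRange a
  have hnd : (List.finRange (2*m)).Nodup := List.nodup_finRange _
  have h := c_move_mem F a (List.finRange (2*m)) hmem hnd
  rw [List.length_finRange, neg_one_sq_pow, one_mul] at h
  rw [mul_smul_comm, h, smul_smul, mul_comm (Complex.I ^ m) (-1), ← smul_smul]
  simp [smul_mul_assoc]

lemma parity_mul_c (F : MajoranaFamily m) (a : Fin (2*m)) :
    parityOp F * F.c a = -(F.c a * parityOp F) := by
  rw [c_mul_parity, neg_neg]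

lemma c_parity_c (F : MajoranaFamily m) (a : Fin (2*m)) :
    F.c a * parityOp F * F.c a = -parityOp F := by
  rw [c_mul_parity, neg_mul, mul_assoc, F.sq, mul_one]

lemma parity_sq (F : MajoranaFamily m) (hm : 1 ≤ m) : parityOp F * parityOp F = 1 := by
  unfold parityOp
  rw [smul_mul_assoc, mul_smul_comm, smul_smul,
    prod_sq F (List.finRange (2*m)) (List.nodup_finRange _), List.length_finRange,
    smul_smul]
  have h1 : (2*m).choose 2 = m * (2*m-1) := by
    rw [Nat.choose_two_right]
    obtain ⟨k, rfl⟩ := Nat.exists_eq_add_of_le hm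
    rw [show 2*(1+k)-1 = 1+2*k from by omega]
    rw [show 2*(1+k)*(1+2*k) = ((1+k)*(1+2*k))*2 from by ring]
    rw [Nat.mul_div_cancel _ (by norm_num)]
  have h2 : Complex.I ^ m * Complex.I ^ m = (-1:ℂ)^m := by
    rw [← pow_add, show m + m = 2*m from by ring, pow_mul, Complex.I_sq]
  rw [h2, h1, ← pow_add]
  have h3 : m + m * (2*m-1) = 2*(m*m) := by
    obtain ⟨k, rfl⟩ := Nat.exists_eq_add_of_le hm
    rw [show 2*(1+k)-1 = 1+2*k from by omega]
    ring
  rw [h3, neg_one_sq_pow, one_smul]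

end Stmt9
namespace Stmt9

/-- The commuting involutions `M_j = i (c_j P) ⊗ c_j`. -/
def Mop (F : MajoranaFamily m) (j : Fin (2*m)) : Mat2 m :=
  Complex.I • ((F.c j * parityOp F) ⊗ₖ F.c j)

/-- Conjugation operators `V_a = c_a ⊗ 1`. -/
def Vop (F : MajoranaFamily m) (a : Fin (2*m)) : Mat2 m := F.c a ⊗ₖ (1 : Mat m)

lemma Vop_sq (F : MajoranaFamily m) (a : Fin (2*m)) : Vop F a * Vop F a = 1 := by
  unfold Vop
  rw [← Matrix.mul_kronecker_mul, F.sq, one_mul, Matrix.one_kronecker_one]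

lemma Mop_sq (F : MajoranaFamily m) (hm : 1 ≤ m) (j : Fin (2*m)) :
    Mop F j * Mop F j = 1 := by
  unfold Mop
  rw [smul_mul_assoc, mul_smul_comm, smul_smul, ← Matrix.mul_kronecker_mul, F.sq]
  have h1 : F.c j * parityOp F * (F.c j * parityOp F) = -1 := by
    rw [← mul_assoc, c_parity_c, neg_mul, parity_sq F hm]
  rw [h1, show (-1 : Mat m) = (-1:ℂ) • 1 from by simp, Matrix.smul_kronecker,
    Matrix.one_kronecker_one, smul_smul, Complex.I_mul_I]
  norm_num

lemma Mop_mul_Mop (F : MajoranaFamily m) (hm : 1 ≤ m) {j k : Fin (2*m)} (h : j ≠ k) :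
    Mop F j * Mop F k = (F.c j * F.c k) ⊗ₖ (F.c j * F.c k) := by
  unfold Mop
  rw [smul_mul_assoc, mul_smul_comm, smul_smul, Complex.I_mul_I,
    ← Matrix.mul_kronecker_mul]
  have h1 : F.c j * parityOp F * (F.c k * parityOp F) = -(F.c j * F.c k) := by
    calc F.c j * parityOp F * (F.c k * parityOp F)
        = F.c j * (parityOp F * F.c k) * parityOp F := by simp only [mul_assoc]
      _ = F.c j * (-(F.c k * parityOp F)) * parityOp F := by rw [parity_mul_c]
      _ = -(F.c j * F.c k * (parityOp F * parityOp F)) := by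
          simp only [mul_neg, neg_mul, mul_assoc]
      _ = -(F.c j * F.c k) := by rw [parity_sq F hm, mul_one]
  rw [h1, show -(F.c j * F.c k) = (-1:ℂ) • (F.c j * F.c k) from by simp,
    Matrix.smul_kronecker, smul_smul]
  norm_num

lemma Mop_comm (F : MajoranaFamily m) (hm : 1 ≤ m) (j k : Fin (2*m)) :
    Commute (Mop F j) (Mop F k) := by
  rcases eq_or_ne j k with rfl | h
  · exact Commute.refl _
  · unfold Commute SemiconjBy
    rw [Mop_mul_Mop F hm h, Mop_mul_Mop F hm h.symm, F.anticomm k j h.symm,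
      show -(F.c j * F.c k) = (-1:ℂ) • (F.c j * F.c k) from by simp,
      Matrix.smul_kronecker, Matrix.kronecker_smul, smul_smul]
    norm_num

lemma Vop_Mop_same (F : MajoranaFamily m) (a : Fin (2*m)) :
    Vop F a * Mop F a * Vop F a = -(Mop F a) := by
  unfold Vop Mop
  rw [mul_smul_comm, smul_mul_assoc, ← Matrix.mul_kronecker_mul, ← Matrix.mul_kronecker_mul,
    one_mul, mul_one]
  have h1 : F.c a * (F.c a * parityOp F) * F.c a = -(F.c a * parityOp F) := by
    rw [← mul_assoc, F.sq, one_mul, parity_mul_c]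
  rw [h1, show -(F.c a * parityOp F) = (-1:ℂ) • (F.c a * parityOp F) from by simp,
    Matrix.smul_kronecker, smul_smul, ← neg_smul]
  congr 1
  ring

lemma Vop_Mop_other (F : MajoranaFamily m) {a k : Fin (2*m)} (h : a ≠ k) :
    Vop F a * Mop F k * Vop F a = Mop F k := by
  unfold Vop Mop
  rw [mul_smul_comm, smul_mul_assoc, ← Matrix.mul_kronecker_mul, ← Matrix.mul_kronecker_mul,
    one_mul, mul_one]
  have h1 : F.c a * (F.c k * parityOp F) * F.c a = F.c k * parityOp F := by
    calc F.c a * (F.c k * parityOp F) * F.c a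
        = (F.c a * F.c k) * (parityOp F * F.c a) := by simp only [mul_assoc]
      _ = (-(F.c k * F.c a)) * (-(F.c a * parityOp F)) := by
          rw [F.anticomm a k h, parity_mul_c]
      _ = F.c k * (F.c a * F.c a) * parityOp F := by
          rw [neg_mul_neg]; simp only [mul_assoc]
      _ = F.c k * parityOp F := by rw [F.sq, mul_one]
  rw [h1]

end Stmt9
namespace Stmt9

/-- Sign function of a subset. -/
def sgn (U : Finset (Fin (2*m))) (j : Fin (2*m)) : ℂ := if j ∈ U then 1 else -1

lemma sgn_pm (U : Finset (Fin (2*m))) (j : Fin (2*m)) : sgn U j = 1 ∨ sgn U j = -1 := by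
  unfold sgn; split_ifs <;> simp

lemma sgn_mem {U : Finset (Fin (2*m))} {j : Fin (2*m)} (h : j ∈ U) : sgn U j = 1 :=
  if_pos h

lemma sgn_not_mem {U : Finset (Fin (2*m))} {j : Fin (2*m)} (h : j ∉ U) : sgn U j = -1 :=
  if_neg h

/-- The projector factor `(1 + ε_j M_j)/2`. -/
def fac (F : MajoranaFamily m) (ε : Fin (2*m) → ℂ) (j : Fin (2*m)) : Mat2 m :=
  (2:ℂ)⁻¹ • (1 + ε j • Mop F j)

lemma Mop_commute_fac (F : MajoranaFamily m) (hm : 1 ≤ m) (j : Fin (2*m))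
    (ε : Fin (2*m) → ℂ) (k : Fin (2*m)) : Commute (Mop F j) (fac F ε k) := by
  unfold fac
  exact ((Commute.one_right (Mop F j)).add_right
    ((Mop_comm F hm j k).smul_right (ε k))).smul_right _

lemma fac_comm (F : MajoranaFamily m) (hm : 1 ≤ m) (ε δ : Fin (2*m) → ℂ)
    (j k : Fin (2*m)) : Commute (fac F ε j) (fac F δ k) := by
  have h1 : Commute (Mop F j) (fac F δ k) := Mop_commute_fac F hm j δ k
  have h3 : Commute ((1:Mat2 m) + ε j • Mop F j) (fac F δ k) :=
    (Commute.one_left _).add_left (h1.smul_left (ε j))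
  exact h3.smul_left _

/-- The joint spectral projector for signs `ε` over index set `S`. -/
def Pproj (F : MajoranaFamily m) (hm : 1 ≤ m) (S : Finset (Fin (2*m)))
    (ε : Fin (2*m) → ℂ) : Mat2 m :=
  S.noncommProd (fac F ε) (fun x _ y _ _ => fac_comm F hm ε ε x y)

lemma Pproj_insert (F : MajoranaFamily m) (hm : 1 ≤ m) {S : Finset (Fin (2*m))}
    {a : Fin (2*m)} (ha : a ∉ S) (ε : Fin (2*m) → ℂ) :
    Pproj F hm (insert a S) ε = fac F ε a * Pproj F hm S ε :=
  Finset.noncommProd_insert_of_notMem _ _ _ _ ha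

lemma Pproj_congr (F : MajoranaFamily m) (hm : 1 ≤ m) {S : Finset (Fin (2*m))}
    {ε δ : Fin (2*m) → ℂ} (h : ∀ j ∈ S, ε j = δ j) :
    Pproj F hm S ε = Pproj F hm S δ := by
  unfold Pproj
  exact Finset.noncommProd_congr rfl (fun x hx => by unfold fac; rw [h x hx]) _

lemma Pproj_empty (F : MajoranaFamily m) (hm : 1 ≤ m) (ε : Fin (2*m) → ℂ) :
    Pproj F hm ∅ ε = 1 :=
  Finset.noncommProd_empty _ _

lemma commute_Pproj (F : MajoranaFamily m) (hm : 1 ≤ m) {X : Mat2 m}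
    (h : ∀ k, Commute X (fac F ε k)) (S : Finset (Fin (2*m))) :
    Commute X (Pproj F hm S ε) :=
  Finset.noncommProd_commute _ _ _ _ (fun k _ => h k)

end Stmt9
namespace Stmt9

variable {F : MajoranaFamily m}

lemma Mop_mul_fac (hm : 1 ≤ m) {ε : Fin (2*m) → ℂ} (j : Fin (2*m))
    (hj : ε j = 1 ∨ ε j = -1) : Mop F j * fac F ε j = ε j • fac F ε j := by
  unfold fac
  rw [mul_smul_comm, mul_add, mul_one, mul_smul_comm, Mop_sq F hm, smul_smul]
  rcases hj with h | h <;> rw [h] <;> module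

lemma fac_sq (hm : 1 ≤ m) {ε : Fin (2*m) → ℂ} (j : Fin (2*m))
    (hj : ε j = 1 ∨ ε j = -1) : fac F ε j * fac F ε j = fac F ε j := by
  unfold fac
  rw [smul_mul_assoc, mul_smul_comm, smul_smul, add_mul, one_mul, mul_add, mul_one,
    smul_mul_assoc, mul_smul_comm, smul_smul, Mop_sq F hm]
  rcases hj with h | h <;> rw [h] <;> module

lemma fac_mul_fac_zero (hm : 1 ≤ m) {ε δ : Fin (2*m) → ℂ} (j : Fin (2*m))
    (hε : ε j = 1 ∨ ε j = -1) (hδ : δ j = 1 ∨ δ j = -1) (hne : ε j ≠ δ j) :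
    fac F ε j * fac F δ j = 0 := by
  unfold fac
  rw [smul_mul_assoc, mul_smul_comm, smul_smul, add_mul, one_mul, mul_add, mul_one,
    smul_mul_assoc, mul_smul_comm, smul_smul, Mop_sq F hm]
  rcases hε with h | h <;> rcases hδ with h' | h' <;> rw [h, h'] <;>
    first
      | (exact absurd (h.trans h'.symm) hne)
      | module

lemma fac_add_fac {ε δ : Fin (2*m) → ℂ} (j : Fin (2*m)) (hε : ε j = -1) (hδ : δ j = 1) :
    fac F ε j + fac F δ j = 1 := by
  unfold fac
  rw [hε, hδ]
  module

end Stmt9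
namespace Stmt9

variable {F : MajoranaFamily m}

lemma Mop_mul_Pproj (hm : 1 ≤ m) {S : Finset (Fin (2*m))} {ε : Fin (2*m) → ℂ}
    {j : Fin (2*m)} (hj : j ∈ S) (hε : ε j = 1 ∨ ε j = -1) :
    Mop F j * Pproj F hm S ε = ε j • Pproj F hm S ε := by
  have h : insert j (S.erase j) = S := Finset.insert_erase hj
  rw [← h, Pproj_insert F hm (Finset.notMem_erase j S) ε, ← mul_assoc,
    Mop_mul_fac hm j hε, smul_mul_assoc]

lemma Pproj_mul_Mop (hm : 1 ≤ m) {S : Finset (Fin (2*m))} {ε : Fin (2*m) → ℂ}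
    {j : Fin (2*m)} (hj : j ∈ S) (hε : ε j = 1 ∨ ε j = -1) :
    Pproj F hm S ε * Mop F j = ε j • Pproj F hm S ε := by
  have hc : Commute (Mop F j) (Pproj F hm S ε) :=
    commute_Pproj F hm (fun k => Mop_commute_fac F hm j ε k) S
  rw [← hc.eq, Mop_mul_Pproj hm hj hε]

lemma fac_commute_Pproj (hm : 1 ≤ m) (ε δ : Fin (2*m) → ℂ) (a : Fin (2*m))
    (S : Finset (Fin (2*m))) : Commute (fac F δ a) (Pproj F hm S ε) :=
  commute_Pproj F hm (fun k => fac_comm F hm δ ε a k) S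

lemma Pproj_idem (hm : 1 ≤ m) {ε : Fin (2*m) → ℂ} (hε : ∀ k, ε k = 1 ∨ ε k = -1)
    (S : Finset (Fin (2*m))) : Pproj F hm S ε * Pproj F hm S ε = Pproj F hm S ε := by
  induction S using Finset.induction_on with
  | empty => rw [Pproj_empty, one_mul]
  | @insert a S ha ih =>
      rw [Pproj_insert F hm ha]
      calc fac F ε a * Pproj F hm S ε * (fac F ε a * Pproj F hm S ε)
          = fac F ε a * (Pproj F hm S ε * fac F ε a) * Pproj F hm S ε := by
            simp only [mul_assoc]
        _ = fac F ε a * (fac F ε a * Pproj F hm S ε) * Pproj F hm S ε := by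
            rw [(fac_commute_Pproj hm ε ε a S).eq]
        _ = (fac F ε a * fac F ε a) * (Pproj F hm S ε * Pproj F hm S ε) := by
            simp only [mul_assoc]
        _ = fac F ε a * Pproj F hm S ε := by rw [fac_sq hm a (hε a), ih]

lemma Pproj_orth (hm : 1 ≤ m) {ε δ : Fin (2*m) → ℂ} (hε : ∀ k, ε k = 1 ∨ ε k = -1)
    (hδ : ∀ k, δ k = 1 ∨ δ k = -1) {S : Finset (Fin (2*m))} {j : Fin (2*m)}
    (hj : j ∈ S) (hne : ε j ≠ δ j) :
    Pproj F hm S ε * Pproj F hm S δ = 0 := by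
  have h : insert j (S.erase j) = S := Finset.insert_erase hj
  rw [← h, Pproj_insert F hm (Finset.notMem_erase j S), Pproj_insert F hm
    (Finset.notMem_erase j S)]
  calc fac F ε j * Pproj F hm (S.erase j) ε * (fac F δ j * Pproj F hm (S.erase j) δ)
      = fac F ε j * (Pproj F hm (S.erase j) ε * fac F δ j) * Pproj F hm (S.erase j) δ := by
        simp only [mul_assoc]
    _ = fac F ε j * (fac F δ j * Pproj F hm (S.erase j) ε) * Pproj F hm (S.erase j) δ := by
        rw [(fac_commute_Pproj hm ε δ j (S.erase j)).eq]
    _ = (fac F ε j * fac F δ j) * (Pproj F hm (S.erase j) ε * Pproj F hm (S.erase j) δ) := by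
        simp only [mul_assoc]
    _ = 0 := by rw [fac_mul_fac_zero hm j (hε j) (hδ j) hne, zero_mul]

lemma Pproj_sum (hm : 1 ≤ m) :
    ∀ S : Finset (Fin (2*m)), ∑ U ∈ S.powerset, Pproj F hm S (sgn U) = 1 := by
  intro S
  induction S using Finset.induction_on with
  | empty => simp [Pproj_empty]
  | @insert a S ha ih =>
      rw [Finset.sum_powerset_insert ha, ← Finset.sum_add_distrib]
      have key : ∀ U ∈ S.powerset,
          Pproj F hm (insert a S) (sgn U) + Pproj F hm (insert a S) (sgn (insert a U))
            = Pproj F hm S (sgn U) := by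
        intro U hU
        have haU : a ∉ U := fun h => ha (Finset.mem_powerset.mp hU h)
        have hcongr : Pproj F hm S (sgn (insert a U)) = Pproj F hm S (sgn U) :=
          Pproj_congr F hm (fun j hj => by
            have hja : j ≠ a := fun h => ha (h ▸ hj)
            unfold sgn
            simp [Finset.mem_insert, hja])
        rw [Pproj_insert F hm ha, Pproj_insert F hm ha, hcongr, ← add_mul,
          fac_add_fac a (sgn_not_mem haU) (sgn_mem (Finset.mem_insert_self a U)), one_mul]
      rw [Finset.sum_congr rfl key, ih]

/-- Conjugation by an involution as a monoid hom. -/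
def conjHom (V : Mat2 m) (hV : V * V = 1) : Mat2 m →* Mat2 m where
  toFun X := V * X * V
  map_one' := by show V * 1 * V = 1; rw [mul_one, hV]
  map_mul' X Y := by
    show V * (X * Y) * V = (V * X * V) * (V * Y * V)
    simp only [mul_assoc]
    rw [show V * (V * (Y * V)) = Y * V from by rw [← mul_assoc, hV, one_mul]]

lemma trace_flip (hm : 1 ≤ m) (a : Fin (2*m)) (U : Finset (Fin (2*m))) (ha : a ∉ U) :
    (Pproj F hm Finset.univ (sgn (insert a U))).trace
      = (Pproj F hm Finset.univ (sgn U)).trace := by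
  have hV : Vop F a * Vop F a = 1 := Vop_sq F a
  have key : conjHom (Vop F a) hV (Pproj F hm Finset.univ (sgn (insert a U)))
      = Pproj F hm Finset.univ (sgn U) := by
    unfold Pproj
    refine (Finset.map_noncommProd _ _ _ (conjHom (Vop F a) hV)).trans ?_
    refine Finset.noncommProd_congr rfl (fun j _ => ?_) _
    show Vop F a * fac F (sgn (insert a U)) j * Vop F a = fac F (sgn U) j
    unfold fac
    rw [mul_smul_comm, smul_mul_assoc, mul_add, mul_one, add_mul, hV, mul_smul_comm,
      smul_mul_assoc]
    rcases eq_or_ne j a with rfl | hja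
    · rw [Vop_Mop_same, sgn_mem (Finset.mem_insert_self j U), sgn_not_mem ha]
      module
    · rw [Vop_Mop_other F (fun h => hja h.symm)]
      have : sgn (insert a U) j = sgn U j := by
        unfold sgn
        simp [Finset.mem_insert, hja]
      rw [this]
  rw [← key]
  symm
  show (Vop F a * Pproj F hm Finset.univ (sgn (insert a U)) * Vop F a).trace = _
  rw [Matrix.trace_mul_cycle, hV, one_mul]

lemma trace_Pproj (hm : 1 ≤ m) (F : MajoranaFamily m) (U : Finset (Fin (2*m))) :
    (Pproj F hm Finset.univ (sgn U)).trace = 1 := by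
  have hconst : ∀ V : Finset (Fin (2*m)),
      (Pproj F hm Finset.univ (sgn V)).trace
        = (Pproj F hm Finset.univ (sgn (∅ : Finset (Fin (2*m))))).trace := by
    intro V
    induction V using Finset.induction_on with
    | empty => rfl
    | @insert a V ha ih => rw [trace_flip hm a V ha, ih]
  have hsum : ∑ V ∈ (Finset.univ : Finset (Fin (2*m))).powerset,
      (Pproj F hm Finset.univ (sgn V)).trace = ((2^(2*m) : ℕ) : ℂ) := by
    rw [← Matrix.trace_sum, Pproj_sum hm, Matrix.trace_one]
    have : (2^(2*m) : ℕ) = 2^m * 2^m := by rw [← pow_add]; congr 1; ring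
    rw [this]
    simp
  rw [Finset.sum_congr rfl (fun V _ => hconst V)] at hsum
  rw [Finset.sum_const, Finset.card_powerset, Finset.card_univ, Fintype.card_fin] at hsum
  have h2 : ((2^(2*m) : ℕ) : ℂ) ≠ 0 := by positivity
  have h3 : (Pproj F hm Finset.univ (sgn (∅ : Finset (Fin (2*m))))).trace = 1 := by
    have := hsum
    rw [nsmul_eq_mul] at this
    have hcard : ((2^(2*m) : ℕ) : ℂ) * (Pproj F hm Finset.univ
        (sgn (∅ : Finset (Fin (2*m))))).trace = ((2^(2*m) : ℕ) : ℂ) * 1 := by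
      rw [mul_one, this]
    exact mul_left_cancel₀ h2 hcard
  rw [hconst U, h3]

end Stmt9
namespace Stmt9

variable {F : MajoranaFamily m}

lemma sum_mulVec {ι α : Type*} [Fintype α] [DecidableEq α] [DecidableEq ι] (s : Finset ι)
    (f : ι → Matrix α α ℂ) (v : α → ℂ) : (∑ i ∈ s, f i) *ᵥ v = ∑ i ∈ s, f i *ᵥ v := by
  induction s using Finset.induction_on with
  | empty => simp [Matrix.zero_mulVec]
  | @insert a s ha ih => rw [Finset.sum_insert ha, Finset.sum_insert ha, Matrix.add_mulVec, ih]

/-- `B = Σ_j M_j`. -/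
def Bop (F : MajoranaFamily m) : Mat2 m := ∑ j, Mop F j

/-- `W = P ⊗ 1`. -/
def Wop (F : MajoranaFamily m) : Mat2 m := parityOp F ⊗ₖ (1 : Mat m)

/-- `Q = Σ_{|U| = m} P_U`. -/
def Qop (F : MajoranaFamily m) (hm : 1 ≤ m) : Mat2 m :=
  ∑ U ∈ Finset.powersetCard m (Finset.univ : Finset (Fin (2*m))),
    Pproj F hm Finset.univ (sgn U)

lemma sgn_sum (U : Finset (Fin (2*m))) :
    ∑ j : Fin (2*m), sgn U j = 2*(U.card:ℂ) - 2*m := by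
  unfold sgn
  calc ∑ j : Fin (2*m), (if j ∈ U then (1:ℂ) else -1)
      = ∑ j : Fin (2*m), ((if j ∈ U then (2:ℂ) else 0) - 1) := by
        refine Finset.sum_congr rfl (fun j _ => ?_)
        split_ifs <;> norm_num
    _ = (∑ j : Fin (2*m), if j ∈ U then (2:ℂ) else 0) - (2*m : ℂ) := by
        rw [Finset.sum_sub_distrib, Finset.sum_const, Finset.card_univ, Fintype.card_fin]
        norm_num
    _ = 2*(U.card:ℂ) - 2*m := by
        rw [Finset.sum_ite_mem, Finset.univ_inter, Finset.sum_const, nsmul_eq_mul]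
        ring_nf

lemma B_mul_Pproj (hm : 1 ≤ m) (U : Finset (Fin (2*m))) :
    Bop F * Pproj F hm Finset.univ (sgn U)
      = (2*(U.card:ℂ) - 2*m) • Pproj F hm Finset.univ (sgn U) := by
  unfold Bop
  rw [Finset.sum_mul, ← sgn_sum U, Finset.sum_smul]
  exact Finset.sum_congr rfl (fun j _ =>
    Mop_mul_Pproj hm (Finset.mem_univ j) (sgn_pm U j))

lemma Pproj_mul_B (hm : 1 ≤ m) (U : Finset (Fin (2*m))) :
    Pproj F hm Finset.univ (sgn U) * Bop F
      = (2*(U.card:ℂ) - 2*m) • Pproj F hm Finset.univ (sgn U) := by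
  unfold Bop
  rw [Finset.mul_sum, ← sgn_sum U, Finset.sum_smul]
  exact Finset.sum_congr rfl (fun j _ =>
    Pproj_mul_Mop hm (Finset.mem_univ j) (sgn_pm U j))

lemma B_mul_Q (hm : 1 ≤ m) : Bop F * Qop F hm = 0 := by
  unfold Qop
  rw [Finset.mul_sum]
  refine Finset.sum_eq_zero (fun U hU => ?_)
  have hcard : U.card = m := (Finset.mem_powersetCard.mp hU).2
  rw [B_mul_Pproj hm U, hcard]
  rw [show 2*(m:ℂ) - 2*m = 0 from by ring, zero_smul]

lemma sgn_ne_of_ne {U V : Finset (Fin (2*m))} (h : U ≠ V) :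
    ∃ j, sgn U j ≠ sgn V j := by
  have : ∃ j, (j ∈ U ∧ j ∉ V) ∨ (j ∈ V ∧ j ∉ U) := by
    by_contra hc
    push_neg at hc
    exact h (Finset.ext (fun j => ⟨(hc j).1, (hc j).2⟩))
  obtain ⟨j, hj | hj⟩ := this
  · exact ⟨j, by rw [sgn_mem hj.1, sgn_not_mem hj.2]; norm_num⟩
  · exact ⟨j, by rw [sgn_mem hj.1, sgn_not_mem hj.2]; norm_num⟩

lemma Pproj_mul_Pproj (hm : 1 ≤ m) {U V : Finset (Fin (2*m))} (h : U ≠ V) :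
    Pproj F hm Finset.univ (sgn U) * Pproj F hm Finset.univ (sgn V) = 0 := by
  obtain ⟨j, hj⟩ := sgn_ne_of_ne h
  exact Pproj_orth hm (sgn_pm U) (sgn_pm V) (Finset.mem_univ j) hj

lemma Q_idem (hm : 1 ≤ m) : Qop F hm * Qop F hm = Qop F hm := by
  unfold Qop
  rw [Finset.sum_mul_sum]
  refine Finset.sum_congr rfl (fun U hU => ?_)
  rw [Finset.sum_eq_single_of_mem U hU (fun V _ hne =>
    Pproj_mul_Pproj hm (Ne.symm hne))]
  exact Pproj_idem hm (sgn_pm U) _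

lemma Q_trace (hm : 1 ≤ m) :
    (Qop F hm).trace = ((Nat.choose (2*m) m : ℕ) : ℂ) := by
  unfold Qop
  rw [Matrix.trace_sum, Finset.sum_congr rfl (fun U _ => trace_Pproj hm F U),
    Finset.sum_const, Finset.card_powersetCard, Finset.card_univ, Fintype.card_fin,
    nsmul_eq_mul, mul_one]

lemma W_sq (hm : 1 ≤ m) : Wop F * Wop F = 1 := by
  unfold Wop
  rw [← Matrix.mul_kronecker_mul, one_mul, parity_sq F hm, Matrix.one_kronecker_one]

lemma Lambda_eq (hm : 1 ≤ m) : Lambda F = (-Complex.I) • (Bop F * Wop F) := by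
  unfold Lambda Bop Wop
  rw [Finset.sum_mul, Finset.smul_sum]
  refine Finset.sum_congr rfl (fun j _ => ?_)
  unfold Mop
  rw [smul_mul_assoc, ← Matrix.mul_kronecker_mul, mul_one, mul_assoc, parity_sq F hm,
    mul_one, smul_smul]
  rw [show -Complex.I * Complex.I = 1 from by
    rw [neg_mul, Complex.I_mul_I, neg_neg], one_smul]

end Stmt9
namespace Stmt9

variable {F : MajoranaFamily m}

lemma ker_eq_range (hm : 1 ≤ m) :
    LinearMap.ker (Bop F).mulVecLin = LinearMap.range (Qop F hm).mulVecLin := by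
  ext v
  simp only [LinearMap.mem_ker, LinearMap.mem_range, Matrix.mulVecLin_apply]
  constructor
  · intro hv
    refine ⟨v, ?_⟩
    have hz : ∀ U ∈ (Finset.univ : Finset (Fin (2*m))).powerset, U.card ≠ m →
        Pproj F hm Finset.univ (sgn U) *ᵥ v = 0 := by
      intro U _ hUm
      have hlam : (2*(U.card:ℂ) - 2*m) ≠ 0 := by
        intro h0
        apply hUm
        have h1 : ((U.card:ℂ)) = (m:ℂ) := by linear_combination h0/2
        exact_mod_cast h1
      have h2 := congrArg (fun X => X *ᵥ v) (Pproj_mul_B (F := F) hm U)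
      rw [← Matrix.mulVec_mulVec, hv, Matrix.mulVec_zero, Matrix.smul_mulVec] at h2
      exact (smul_eq_zero_iff_right hlam).mp h2.symm
    have h1 : v = ∑ U ∈ (Finset.univ : Finset (Fin (2*m))).powerset,
        Pproj F hm Finset.univ (sgn U) *ᵥ v := by
      conv_lhs => rw [← Matrix.one_mulVec v, ← Pproj_sum (F := F) hm Finset.univ]
      rw [sum_mulVec]
    rw [Qop, sum_mulVec, Finset.powersetCard_eq_filter]
    rw [Finset.sum_filter_of_ne (fun U hU hne => by
      by_contra hc
      exact hne (hz U hU hc))]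
    exact h1.symm
  · rintro ⟨w, rfl⟩
    rw [Matrix.mulVec_mulVec, B_mul_Q hm, Matrix.zero_mulVec]

lemma finrank_range_Q (hm : 1 ≤ m) (F : MajoranaFamily m) :
    Module.finrank ℂ (LinearMap.range (Qop F hm).mulVecLin) = Nat.choose (2*m) m := by
  set π := (Qop F hm).mulVecLin with hπ
  have hππ : π ∘ₗ π = π := by
    rw [hπ, ← Matrix.mulVecLin_mul, Q_idem hm]
  have hproj : LinearMap.IsProj (LinearMap.range π) π := by
    refine ⟨fun x => LinearMap.mem_range_self π x, ?_⟩
    rintro x ⟨y, rfl⟩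
    exact congrFun (congrArg DFunLike.coe hππ) y
  have htr := hproj.trace
  have htr2 : LinearMap.trace ℂ _ π = (Qop F hm).trace := by
    rw [LinearMap.trace_eq_matrix_trace ℂ (Pi.basisFun ℂ (Fin (2^m) × Fin (2^m))) π,
      LinearMap.toMatrix_eq_toMatrix', hπ, ← Matrix.toLin'_apply', LinearMap.toMatrix'_toLin']
  rw [htr2, Q_trace hm] at htr
  exact_mod_cast htr.symm

lemma mulVecLin_smul {α : Type*} [Fintype α] [DecidableEq α] (c : ℂ) (A : Matrix α α ℂ) :
    (c • A).mulVecLin = c • A.mulVecLin := by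
  refine LinearMap.ext (fun v => ?_)
  simp only [Matrix.mulVecLin_apply, LinearMap.smul_apply]
  rw [Matrix.smul_mulVec]

end Stmt9

/-- The null space of `Λ` has dimension `C(2m, m)`. -/
theorem stmt_9 (m : ℕ) (hm : 1 ≤ m) (F : MajoranaFamily m) :
    Module.finrank ℂ (LinearMap.ker (Lambda F).mulVecLin) = Nat.choose (2*m) m := by
  classical
  rw [Stmt9.Lambda_eq hm, Stmt9.mulVecLin_smul,
    LinearMap.ker_smul _ _ (neg_ne_zero.mpr Complex.I_ne_zero),
    Matrix.mulVecLin_mul, LinearMap.ker_comp]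
  have hWW : (Stmt9.Wop F).mulVecLin ∘ₗ (Stmt9.Wop F).mulVecLin = LinearMap.id := by
    rw [← Matrix.mulVecLin_mul, Stmt9.W_sq hm, Matrix.mulVecLin_one]
  set e : (Fin (2^m) × Fin (2^m) → ℂ) ≃ₗ[ℂ] (Fin (2^m) × Fin (2^m) → ℂ) :=
    LinearEquiv.ofLinear (Stmt9.Wop F).mulVecLin (Stmt9.Wop F).mulVecLin hWW hWW with he
  have hcoe : (Stmt9.Wop F).mulVecLin = (e : (Fin (2^m) × Fin (2^m) → ℂ) →ₗ[ℂ]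
      (Fin (2^m) × Fin (2^m) → ℂ)) := rfl
  rw [hcoe, Submodule.comap_equiv_eq_map_symm, LinearEquiv.finrank_map_eq,
    Stmt9.ker_eq_range hm, Stmt9.finrank_range_Q hm F]

end
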